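/- For any finite game with c players, at most n actions per player, integral payoffs bounded above by a ≥ 0 and below by b ≤ 0 with a - b > 0, any correlated strategy σ (a probability distribution over action profiles) with expected payoff vector p, and any polynomial bound q(n) ≥ 1, there exists a finite sequence of action profiles of length at most w(n) = ((a-b)q(n)+1)·n^c in which each action profile a appears exactly ⌊w(n)·σ(a)⌋ times, such that for every player i, the average payoff of player i over the sequence is at least p_i - 1/q(n). -/

import Mathlib

/-- existence of a finite sequence realizing a correlated strategy's
payoff up to 1/q, each profile appearing exactly ⌊w·σ(a)⌋ times. -/
theorem correlated_strategy_sequence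
    (c n : ℕ) (a b : ℤ) (ha : 0 ≤ a) (hb : b ≤ 0) (hab : b < a)
    (A : Fin c → Type) [∀ i, Fintype (A i)] [∀ i, DecidableEq (A i)]
    (hcard : ∀ i, Fintype.card (A i) ≤ n)
    (u : Fin c → (∀ i, A i) → ℤ)
    (hub : ∀ i x, b ≤ u i x ∧ u i x ≤ a)
    (σ : (∀ i, A i) → ℝ) (hσ0 : ∀ x, 0 ≤ σ x) (hσ1 : ∑ x, σ x = 1)
    (q : ℕ) (hq : 1 ≤ q)
    (w : ℤ) (hw : w = ((a - b) * q + 1) * (n : ℤ) ^ c)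
    (p : Fin c → ℝ) (hp : ∀ i, p i = ∑ x, σ x * (u i x : ℝ)) :
    ∃ L : List (∀ i, A i),
      (L.length : ℤ) ≤ w ∧
      (∀ x : ∀ i, A i, (L.count x : ℤ) = ⌊(w : ℝ) * σ x⌋) ∧
      (∀ i : Fin c,
        (((L.map (fun x => (u i x : ℝ))).sum) / (L.length : ℝ)) ≥ p i - 1 / (q : ℝ)) := by
  classical
  have hne : Nonempty (∀ i, A i) := by
    by_contra h
    rw [not_nonempty_iff] at h
    rw [Finset.univ_eq_empty, Finset.sum_empty] at hσ1
    exact zero_ne_one hσ1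
  set N : ℕ := Fintype.card (∀ i, A i) with hN
  have hN1 : 1 ≤ N := Fintype.card_pos
  have hNnc : (N : ℤ) ≤ (n : ℤ) ^ c := by
    have h : N ≤ n ^ c := by
      rw [hN, Fintype.card_pi]
      calc ∏ i, Fintype.card (A i) ≤ ∏ _i : Fin c, n :=
            Finset.prod_le_prod' fun i _ => hcard i
        _ = n ^ c := by simp
    exact_mod_cast h
  have hab1 : (1 : ℤ) ≤ a - b := by omega
  have hqZ : (0 : ℤ) ≤ (q : ℤ) := Int.ofNat_nonneg q
  have hq1Z : (1 : ℤ) ≤ (q : ℤ) := by exact_mod_cast hq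
  have hq1 : (1 : ℝ) ≤ (q : ℝ) := by exact_mod_cast hq
  have hq0 : (0 : ℝ) < (q : ℝ) := by linarith
  have habq : (0 : ℤ) ≤ (a - b) * q := mul_nonneg (by omega) hqZ
  have hpow0 : (0 : ℤ) ≤ (n : ℤ) ^ c := pow_nonneg (Int.ofNat_nonneg n) c
  have hw0 : (0 : ℤ) ≤ w := by
    rw [hw]; exact mul_nonneg (by linarith) hpow0
  -- key integer inequality
  have hkeyZ : (a - b) * q * N + N ≤ w := by
    have h1 : (a - b) * q * N ≤ (a - b) * q * (n : ℤ) ^ c :=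
      mul_le_mul_of_nonneg_left hNnc habq
    rw [hw]; nlinarith
  have hkeyR : ((a : ℝ) - b) * q * N + N ≤ (w : ℝ) := by exact_mod_cast hkeyZ
  have habqN1 : (1 : ℝ) ≤ ((a : ℝ) - b) * q * N := by
    have : (1 : ℤ) ≤ (a - b) * q * N := by
      have hN1' : (1 : ℤ) ≤ (N : ℤ) := by exact_mod_cast hN1
      nlinarith
    exact_mod_cast this
  -- the multiplicities
  set k : (∀ i, A i) → ℕ := fun x => (⌊(w : ℝ) * σ x⌋).toNat with hkdef
  have hwσ0 : ∀ x, (0 : ℝ) ≤ (w : ℝ) * σ x := fun x =>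
    mul_nonneg (by exact_mod_cast hw0) (hσ0 x)
  have hkZ : ∀ x, ((k x : ℤ)) = ⌊(w : ℝ) * σ x⌋ := fun x =>
    Int.toNat_of_nonneg (Int.floor_nonneg.mpr (hwσ0 x))
  have hkle : ∀ x, (k x : ℝ) ≤ (w : ℝ) * σ x := by
    intro x
    have := Int.floor_le ((w : ℝ) * σ x)
    calc (k x : ℝ) = ((k x : ℤ) : ℝ) := by push_cast; ring
      _ = (⌊(w : ℝ) * σ x⌋ : ℝ) := by rw [hkZ x]
      _ ≤ (w : ℝ) * σ x := this
  have hkgt : ∀ x, (w : ℝ) * σ x - 1 < (k x : ℝ) := by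
    intro x
    have := Int.sub_one_lt_floor ((w : ℝ) * σ x)
    calc (w : ℝ) * σ x - 1 < (⌊(w : ℝ) * σ x⌋ : ℝ) := this
      _ = ((k x : ℤ) : ℝ) := by rw [hkZ x]
      _ = (k x : ℝ) := by push_cast; ring
  -- the list
  refine ⟨Finset.univ.toList.flatMap fun x => List.replicate (k x) x, ?_, ?_, ?_⟩
  case refine_2 =>
    intro x
    have hc : (Finset.univ.toList.flatMap fun x => List.replicate (k x) x).count x = k x := by
      simp [List.count_flatMap, List.count_replicate]
    rw [hc, hkZ x]
  all_goals {
    have hlen : (Finset.univ.toList.flatMap fun x => List.replicate (k x) x).length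
        = ∑ x, k x := by simp [List.length_flatMap]
    have hm1 : ((∑ x, k x : ℕ) : ℝ) ≤ (w : ℝ) := by
      push_cast
      calc ∑ x, (k x : ℝ) ≤ ∑ x, (w : ℝ) * σ x := Finset.sum_le_sum fun x _ => hkle x
        _ = (w : ℝ) * ∑ x, σ x := by rw [Finset.mul_sum]
        _ = (w : ℝ) := by rw [hσ1, mul_one]
    have hm2 : (w : ℝ) - N < ((∑ x, k x : ℕ) : ℝ) := by
      push_cast
      calc (w : ℝ) - N = ∑ x, ((w : ℝ) * σ x - 1) := by
            rw [Finset.sum_sub_distrib, ← Finset.mul_sum, hσ1, mul_one]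
            simp [hN]
        _ < ∑ x, (k x : ℝ) :=
            Finset.sum_lt_sum_of_nonempty Finset.univ_nonempty fun x _ => hkgt x
    have hm0 : (0 : ℝ) < ((∑ x, k x : ℕ) : ℝ) := by linarith
    first
    | -- length bound
      ( rw [hlen]
        have : ((∑ x, k x : ℕ) : ℝ) ≤ ((w : ℤ) : ℝ) := hm1
        exact_mod_cast this )
    | -- payoff bound
      ( intro i
        have hmap : ((Finset.univ.toList.flatMap fun x => List.replicate (k x) x).map
            (fun x => (u i x : ℝ))).sum = ∑ x, (k x : ℝ) * (u i x : ℝ) := by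
          simp [List.map_flatMap, List.flatMap, List.sum_flatten, Function.comp_def,
            nsmul_eq_mul]
        rw [hmap, hlen, ge_iff_le, le_div_iff₀ hm0]
        set m : ℝ := ((∑ x, k x : ℕ) : ℝ) with hmdef
        -- payoff sum lower bound
        have hS : (w : ℝ) * p i - N * a ≤ ∑ x, (k x : ℝ) * (u i x : ℝ) := by
          have hterm : ∀ x ∈ Finset.univ, ((w : ℝ) * σ x - k x) * (u i x : ℝ) ≤ (a : ℝ) := by
            intro x _
            have h1 := hkle x
            have h2 := hkgt x
            have h3 : (b : ℝ) ≤ (u i x : ℝ) := by exact_mod_cast (hub i x).1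
            have h4 : (u i x : ℝ) ≤ (a : ℝ) := by exact_mod_cast (hub i x).2
            have ha' : (0 : ℝ) ≤ (a : ℝ) := by exact_mod_cast ha
            rcases le_or_gt 0 ((u i x : ℝ)) with h5 | h5
            · nlinarith
            · nlinarith
          have hsum := Finset.sum_le_sum hterm
          have heq : ∑ x, ((w : ℝ) * σ x - k x) * (u i x : ℝ)
              = (w : ℝ) * p i - ∑ x, (k x : ℝ) * (u i x : ℝ) := by
            rw [hp i, Finset.mul_sum, ← Finset.sum_sub_distrib]
            congr 1; ext x; ring
          rw [heq] at hsum
          simp only [Finset.sum_const, Finset.card_univ, nsmul_eq_mul] at hsum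
          have : (↑(Fintype.card ((i : Fin c) → A i)) : ℝ) = (N : ℝ) := by rw [hN]
          linarith [hsum]
        have hpb : (b : ℝ) ≤ p i := by
          rw [hp i]
          have : ∀ x ∈ Finset.univ, σ x * (b : ℝ) ≤ σ x * (u i x : ℝ) := by
            intro x _
            exact mul_le_mul_of_nonneg_left (by exact_mod_cast (hub i x).1) (hσ0 x)
          calc (b : ℝ) = (∑ x, σ x) * b := by rw [hσ1, one_mul]
            _ = ∑ x, σ x * (b : ℝ) := by rw [Finset.sum_mul]
            _ ≤ ∑ x, σ x * (u i x : ℝ) := Finset.sum_le_sum this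
        -- final arithmetic
        have t3 : ((a : ℝ) - b) * q * N ≤ m := by linarith
        have t1 : (0 : ℝ) ≤ (q : ℝ) * ((w : ℝ) - m) * (p i - b) :=
          mul_nonneg (mul_nonneg (le_of_lt hq0) (by linarith)) (by linarith)
        have t2 : (0 : ℝ) ≤ (q : ℝ) * ((N : ℝ) - ((w : ℝ) - m)) * (-(b : ℝ)) := by
          have hb' : (0 : ℝ) ≤ -(b : ℝ) := by
            have : (b : ℝ) ≤ 0 := by exact_mod_cast hb
            linarith
          exact mul_nonneg (mul_nonneg (le_of_lt hq0) (by linarith)) hb'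
        have t4 : (q : ℝ) * ((w : ℝ) * p i - N * a) ≤ (q : ℝ) * ∑ x, (k x : ℝ) * (u i x : ℝ) :=
          mul_le_mul_of_nonneg_left hS (le_of_lt hq0)
        have hqne : (q : ℝ) ≠ 0 := ne_of_gt hq0
        rw [← mul_le_mul_iff_right₀ hq0]
        have expand : (q : ℝ) * ((p i - 1 / (q : ℝ)) * m) = (q : ℝ) * p i * m - m := by
          field_simp
        rw [expand]
        linarith [t1, t2, t3, t4] )
  }
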